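/- The gossip monoid G_n equals the submonoid of n × n boolean matrices generated by the adjacency matrices of all equivalence relations on {1,…,n}. -/

import Mathlib

namespace Gossip

variable {n : ℕ}

/-- Boolean matrix multiplication over the semiring ({0,1}, max, min). -/
def bmul (A B : Matrix (Fin n) (Fin n) Bool) : Matrix (Fin n) (Fin n) Bool :=
  fun i j => decide (∃ k, A i k = true ∧ B k j = true)

/-- The identity boolean matrix. -/
def idm : Matrix (Fin n) (Fin n) Bool := fun a b => decide (a = b)

/-- The call matrix C[i,j]. -/
def call (i j : Fin n) : Matrix (Fin n) (Fin n) Bool :=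
  fun a b => decide (a = b ∨ (a = i ∧ b = j) ∨ (a = j ∧ b = i))

/-- Product of a list of boolean matrices (empty product is the identity). -/
def prodList : List (Matrix (Fin n) (Fin n) Bool) → Matrix (Fin n) (Fin n) Bool
  | [] => idm
  | M :: L => bmul M (prodList L)

/-- Membership in the gossip monoid `G_n`: a product of call matrices. -/
def InGossip (A : Matrix (Fin n) (Fin n) Bool) : Prop :=
  ∃ L : List (Fin n × Fin n), (∀ p ∈ L, p.1 ≠ p.2) ∧
    A = prodList (L.map fun p => call p.1 p.2)

/-- Membership in the submonoid generated by adjacency matrices of equivalence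
relations: a product of such adjacency matrices. -/
def InEqGen (A : Matrix (Fin n) (Fin n) Bool) : Prop :=
  ∃ L : List (Matrix (Fin n) (Fin n) Bool),
    (∀ M ∈ L, ∃ r : Fin n → Fin n → Prop,
      Equivalence r ∧ ∀ i j, M i j = true ↔ r i j) ∧
    A = prodList L

lemma bmul_iff (A B : Matrix (Fin n) (Fin n) Bool) (i j : Fin n) :
    bmul A B i j = true ↔ ∃ k, A i k = true ∧ B k j = true := by
  simp [bmul]

lemma bmul_assoc (A B C : Matrix (Fin n) (Fin n) Bool) :
    bmul (bmul A B) C = bmul A (bmul B C) := by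
  funext i j
  simp only [bmul, decide_eq_decide]
  refine decide_eq_decide.mpr ?_
  constructor
  · rintro ⟨k, hk, hC⟩
    obtain ⟨l, hA, hB⟩ := of_decide_eq_true hk
    exact ⟨l, hA, decide_eq_true ⟨k, hB, hC⟩⟩
  · rintro ⟨k, hA, hk⟩
    obtain ⟨l, hB, hC⟩ := of_decide_eq_true hk
    exact ⟨l, decide_eq_true ⟨k, hA, hB⟩, hC⟩

lemma bmul_idm_left (A : Matrix (Fin n) (Fin n) Bool) : bmul idm A = A := by
  funext i j
  simp only [bmul, idm]
  cases h : A i j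
  · refine decide_eq_false ?_
    rintro ⟨k, hk, hA⟩
    simp only [decide_eq_true_eq] at hk
    subst hk; rw [h] at hA; exact Bool.false_ne_true hA
  · exact decide_eq_true ⟨i, by simp, h⟩

lemma prodList_append (L₁ L₂ : List (Matrix (Fin n) (Fin n) Bool)) :
    prodList (L₁ ++ L₂) = bmul (prodList L₁) (prodList L₂) := by
  induction L₁ with
  | nil => simp [prodList, bmul_idm_left]
  | cons M L ih => simp [prodList, ih, bmul_assoc]

/-- Subset lemma: a product of matrices each contained in a transitive
reflexive relation `r` is contained in `r`. -/
lemma prodList_subset (r : Fin n → Fin n → Prop) (hr : Equivalence r)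
    (L : List (Matrix (Fin n) (Fin n) Bool))
    (hL : ∀ M ∈ L, ∀ a b, M a b = true → r a b) :
    ∀ a b, prodList L a b = true → r a b := by
  induction L with
  | nil =>
    intro a b h
    simp only [prodList, idm, decide_eq_true_eq] at h
    subst h; exact hr.refl a
  | cons M L ih =>
    intro a b h
    rw [prodList, bmul_iff] at h
    obtain ⟨k, hM, hP⟩ := h
    exact hr.trans (hL M (List.mem_cons_self) a k hM)
      (ih (fun N hN => hL N (List.mem_cons_of_mem _ hN)) k b hP)

lemma prodList_refl (L : List (Matrix (Fin n) (Fin n) Bool))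
    (hL : ∀ M ∈ L, ∀ a, M a a = true) (a : Fin n) :
    prodList L a a = true := by
  induction L with
  | nil => simp [prodList, idm]
  | cons M L ih =>
    rw [prodList, bmul_iff]
    exact ⟨a, hL M (List.mem_cons_self) a,
      ih (fun N hN => hL N (List.mem_cons_of_mem _ hN))⟩

lemma prodList_edge (L : List (Matrix (Fin n) (Fin n) Bool))
    (hL : ∀ M ∈ L, ∀ a, M a a = true)
    (M : Matrix (Fin n) (Fin n) Bool) (hM : M ∈ L) (a b : Fin n)
    (hab : M a b = true) : prodList L a b = true := by
  induction L with
  | nil => exact (List.not_mem_nil hM).elim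
  | cons N L ih =>
    rw [prodList, bmul_iff]
    rcases List.mem_cons.mp hM with h | h
    · subst h
      exact ⟨b, hab, prodList_refl L (fun N hN => hL N (List.mem_cons_of_mem _ hN)) b⟩
    · exact ⟨a, hL N (List.mem_cons_self) a,
        ih (fun N hN => hL N (List.mem_cons_of_mem _ hN)) h⟩

lemma call_refl (i j a : Fin n) : call i j a a = true := by
  simp [call]

/-- The adjacency matrix of any equivalence relation lies in the gossip
monoid. -/
lemma equiv_inGossip (r : Fin n → Fin n → Prop) (hr : Equivalence r)
    (M : Matrix (Fin n) (Fin n) Bool) (hM : ∀ i j, M i j = true ↔ r i j) :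
    InGossip M := by
  classical
  -- representative function: min of the equivalence class
  set f : Fin n → Fin n := fun i =>
    (Finset.univ.filter (fun j => r i j)).min' ⟨i, by simp [hr.refl i]⟩ with hf
  have hfr : ∀ i, r i (f i) := by
    intro i
    have := Finset.min'_mem (Finset.univ.filter (fun j => r i j))
      ⟨i, by simp [hr.refl i]⟩
    simpa using this
  have hfeq : ∀ i j, r i j → f i = f j := by
    intro i j hij
    have : (Finset.univ.filter fun k => r i k) = (Finset.univ.filter fun k => r j k) := by
      ext k
      simp only [Finset.mem_filter, Finset.mem_univ, true_and]
      exact ⟨fun h => hr.trans (hr.symm hij) h, fun h => hr.trans hij h⟩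
    simp only [hf]
    congr 1
  -- the list of calls
  set L : List (Fin n × Fin n) :=
    (List.finRange n).filterMap (fun i => if f i = i then none else some (i, f i)) with hL
  have hLmem : ∀ p ∈ L, p.2 = f p.1 ∧ p.1 ≠ p.2 := by
    intro p hp
    rw [hL, List.mem_filterMap] at hp
    obtain ⟨i, _, hi⟩ := hp
    by_cases h : f i = i
    · simp [h] at hi
    · simp only [h, if_false, Option.some_inj] at hi
      subst hi
      exact ⟨rfl, fun h' => h h'.symm⟩
  set Ms : List (Matrix (Fin n) (Fin n) Bool) := L.map (fun p => call p.1 p.2) with hMs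
  have hrefl : ∀ N ∈ Ms, ∀ a, N a a = true := by
    intro N hN a
    rw [hMs, List.mem_map] at hN
    obtain ⟨p, _, hp⟩ := hN
    subst hp; exact call_refl _ _ _
  have hsub : ∀ N ∈ Ms, ∀ a b, N a b = true → r a b := by
    intro N hN a b hab
    rw [hMs, List.mem_map] at hN
    obtain ⟨p, hpL, hp⟩ := hN
    obtain ⟨hp2, _⟩ := hLmem p hpL
    subst hp
    simp only [call, decide_eq_true_eq] at hab
    rcases hab with h | ⟨h1, h2⟩ | ⟨h1, h2⟩
    · subst h; exact hr.refl a
    · subst h1; subst h2; rw [hp2]; exact hfr _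
    · subst h1; subst h2; rw [hp2]; exact hr.symm (hfr _)
  set P : Matrix (Fin n) (Fin n) Bool := prodList Ms with hP
  have hPsub : ∀ a b, P a b = true → r a b := prodList_subset r hr Ms hsub
  have hPedge : ∀ i, P i (f i) = true ∧ P (f i) i = true := by
    intro i
    by_cases h : f i = i
    · rw [h]
      exact ⟨prodList_refl Ms hrefl i, prodList_refl Ms hrefl i⟩
    · have hmem : (i, f i) ∈ L := by
        rw [hL, List.mem_filterMap]
        exact ⟨i, List.mem_finRange i, by simp [h]⟩
      have hcall : call i (f i) ∈ Ms := by
        rw [hMs, List.mem_map]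
        exact ⟨(i, f i), hmem, rfl⟩
      constructor
      · exact prodList_edge Ms hrefl _ hcall i (f i) (by simp [call])
      · exact prodList_edge Ms hrefl _ hcall (f i) i (by simp [call])
  refine ⟨L ++ L, ?_, ?_⟩
  · intro p hp
    rcases List.mem_append.mp hp with h | h
    · exact (hLmem p h).2
    · exact (hLmem p h).2
  · rw [List.map_append, prodList_append, ← hMs, ← hP]
    funext a b
    rw [Bool.eq_iff_iff, hM, bmul_iff]
    constructor
    · intro hab
      refine ⟨f a, (hPedge a).1, ?_⟩
      rw [hfeq a b hab]
      exact (hPedge b).2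
    · rintro ⟨k, h1, h2⟩
      exact hr.trans (hPsub a k h1) (hPsub k b h2)

theorem stmt_13 (A : Matrix (Fin n) (Fin n) Bool) :
    InGossip A ↔ InEqGen A := by
  constructor
  · rintro ⟨L, _, rfl⟩
    refine ⟨L.map fun p => call p.1 p.2, ?_, rfl⟩
    intro M hM
    rw [List.mem_map] at hM
    obtain ⟨⟨i, j⟩, _, rfl⟩ := hM
    refine ⟨fun a b => a = b ∨ (a = i ∧ b = j) ∨ (a = j ∧ b = i), ?_, ?_⟩
    · refine ⟨fun a => Or.inl rfl, ?_, ?_⟩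
      · intro a b hab
        rcases hab with h | ⟨h1, h2⟩ | ⟨h1, h2⟩
        · exact Or.inl h.symm
        · exact Or.inr (Or.inr ⟨h2, h1⟩)
        · exact Or.inr (Or.inl ⟨h2, h1⟩)
      · intro a b c hab hbc
        rcases hab with h | ⟨h1, h2⟩ | ⟨h1, h2⟩
        · subst h; exact hbc
        · subst h1; subst h2
          rcases hbc with h | ⟨h1, h2⟩ | ⟨h1, h2⟩
          · exact Or.inr (Or.inl ⟨rfl, h.symm⟩)
          · exact Or.inr (Or.inl ⟨rfl, h2⟩)
          · exact Or.inl h2.symm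
        · subst h1; subst h2
          rcases hbc with h | ⟨h1, h2⟩ | ⟨h1, h2⟩
          · exact Or.inr (Or.inr ⟨rfl, h.symm⟩)
          · exact Or.inl h2.symm
          · exact Or.inr (Or.inr ⟨rfl, h2⟩)
    · intro a b; simp [call]
  · rintro ⟨L, hL, rfl⟩
    induction L with
    | nil => exact ⟨[], by simp, rfl⟩
    | cons M L ih =>
      obtain ⟨r, hr, hM⟩ := hL M (List.mem_cons_self)
      obtain ⟨L₁, h₁, hP₁⟩ := equiv_inGossip r hr M hM
      obtain ⟨L₂, h₂, hP₂⟩ := ih (fun N hN => hL N (List.mem_cons_of_mem _ hN))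
      refine ⟨L₁ ++ L₂, ?_, ?_⟩
      · intro p hp
        rcases List.mem_append.mp hp with h | h
        · exact h₁ p h
        · exact h₂ p h
      · rw [List.map_append, prodList_append, ← hP₁, ← hP₂, prodList]
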